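/- Let φ ∈ [0,1) and let f : ℕ → ℝ be such that Δf(n) → ψ ∈ ℝ as n → ∞. If (1/N) ∑_{n=1}^{N} |Δf(n) + φ| → 0 as N → ∞ and yₙ = e(f(n)) for n ≥ 1, then every solution of the difference equation x_{n+1} = e(−φ)·xₙ + yₙ (n ≥ 1) is unbounded, i.e. {e(f(n))}_{n≥1} ∉ 𝕎_φ. -/

import Mathlib

open Filter

/-- `e(x) = e^{2πix}`. -/
noncomputable def e (x : ℝ) : ℂ := Complex.exp (2 * Real.pi * Complex.I * x)

/-- `𝕎_φ`: the set of sequences `{yₙ}` such that every solution of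
`x_{n+1} = e(−φ)xₙ + yₙ` (n ≥ 1) is bounded. -/
def memW (φ : ℝ) (y : ℕ → ℂ) : Prop :=
  ∀ x : ℕ → ℂ, (∀ n, 1 ≤ n → x (n + 1) = e (-φ) * x n + y n) →
    ∃ C : ℝ, ∀ n, 1 ≤ n → ‖x n‖ ≤ C

lemma e_eq (x : ℝ) : e x = Complex.exp ((2 * Real.pi * x : ℝ) * Complex.I) := by
  unfold e; push_cast; ring_nf

lemma e_add (a b : ℝ) : e (a + b) = e a * e b := by
  unfold e; rw [← Complex.exp_add]; push_cast; ring_nf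

lemma e_abs (x : ℝ) : ‖e x‖ = 1 := by
  rw [e_eq, Complex.norm_exp_ofReal_mul_I]

lemma e_re (x : ℝ) : (e x).re = Real.cos (2 * Real.pi * x) := by
  rw [e_eq, Complex.exp_ofReal_mul_I_re]

/-- if `Δf(n) → ψ` and `(1/N) ∑_{n=1}^{N} |Δf(n) + φ| → 0`, then
`{e(f(n))}_{n≥1} ∉ 𝕎_φ`, i.e. every solution of the corresponding equation is
unbounded. -/
theorem stmt_12 (φ : ℝ) (hφ0 : 0 ≤ φ) (hφ1 : φ < 1) (f : ℕ → ℝ)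
    (ψ : ℝ) (hψ : Tendsto (fun n : ℕ => f (n + 1) - f n) atTop (nhds ψ))
    (havg : Tendsto
      (fun N : ℕ => (1 / (N : ℝ)) * ∑ n ∈ Finset.Icc 1 N, |f (n + 1) - f n + φ|)
      atTop (nhds 0)) :
    ¬ memW φ (fun n => e (f n)) := by
  intro hW
  set g : ℕ → ℝ := fun n => f n + (n + 1) * φ with hgdef
  set d : ℕ → ℝ := fun n => f (n + 1) - f n + φ with hddef
  set S : ℕ → ℂ := fun m => ∑ k ∈ Finset.Ioc 0 m, e (g k) with hSdef
  set A : ℕ → ℝ := fun N => ∑ k ∈ Finset.Ioc 0 N, |d k| with hAdef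
  have hd : ∀ k, d k = g (k + 1) - g k := by
    intro k; simp only [hddef, hgdef]; push_cast; ring
  have hAmono : Monotone A := by
    intro a b hab
    exact Finset.sum_le_sum_of_subset_of_nonneg
      (Finset.Ioc_subset_Ioc le_rfl hab) (fun i _ _ => abs_nonneg _)
  have hA0 : ∀ N, 0 ≤ A N := fun N => Finset.sum_nonneg fun i _ => abs_nonneg _
  -- the solution
  set x : ℕ → ℂ := fun n => e (-(n : ℝ) * φ) * S (n - 1) with hxdef
  have hrec : ∀ n, 1 ≤ n → x (n + 1) = e (-φ) * x n + e (f n) := by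
    intro n hn
    have hS1 : S n = S (n - 1) + e (g n) := by
      obtain ⟨m, rfl⟩ := Nat.exists_eq_add_of_le hn
      simp only [hSdef, Nat.add_sub_cancel_left]
      rw [show 1 + m = m + 1 by ring, Finset.sum_Ioc_succ_top (Nat.zero_le m)]
    show e (-((n : ℕ) + 1 : ℕ) * φ) * S (n + 1 - 1) =
      e (-φ) * (e (-(n : ℝ) * φ) * S (n - 1)) + e (f n)
    rw [Nat.add_sub_cancel, hS1, mul_add]
    congr 1
    · rw [← mul_assoc, ← e_add]; congr 2; push_cast; ring
    · rw [← e_add]; rw [show -((n : ℕ) + 1 : ℕ) * φ + g n = f n by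
        simp only [hgdef]; push_cast; ring]
  obtain ⟨C, hC⟩ := hW x hrec
  have hSC : ∀ m, ‖S m‖ ≤ C := by
    intro m
    have h := hC (m + 1) (Nat.le_add_left 1 m)
    rwa [hxdef, norm_mul, e_abs, one_mul, Nat.add_sub_cancel] at h
  have hC0 : 0 ≤ C := le_trans (norm_nonneg _) (hSC 0)
  -- choose L
  set L : ℕ := ⌈4 * C⌉₊ + 1 with hLdef
  have hL1 : 1 ≤ L := Nat.le_add_left 1 _
  have hLC : 4 * C < (L : ℝ) := by
    have := Nat.le_ceil (4 * C)
    push_cast [hLdef]; linarith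
  set ε : ℝ := 1 / (26 * L) with hεdef
  have hε : 0 < ε := by
    apply div_pos one_pos
    positivity
  -- eventual bound on A
  have hav' : ∀ᶠ N : ℕ in atTop, (1 / (N : ℝ)) * A N < ε := by
    have : Tendsto (fun N : ℕ => (1 / (N : ℝ)) * A N) atTop (nhds 0) := by
      convert havg using 2 with N
      simp only [hAdef, hddef, ← Finset.Icc_add_one_left_eq_Ioc, zero_add]
    exact this.eventually (gt_mem_nhds hε)
  obtain ⟨N₁, hN₁⟩ := eventually_atTop.mp hav'
  set N₀ : ℕ := max N₁ 1 with hN₀def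
  have hN₀1 : 1 ≤ N₀ := le_max_right _ _
  have hAbd : ∀ N, N₀ ≤ N → A N ≤ ε * N := by
    intro N hN
    have h1 : (1 : ℝ) ≤ N := by exact_mod_cast le_trans hN₀1 hN
    have h2 := hN₁ N (le_trans (le_max_left _ _) hN)
    have hNpos : (0 : ℝ) < N := by linarith
    rw [div_mul_eq_mul_div, one_mul, div_lt_iff₀ hNpos] at h2
    linarith [h2]
  -- pigeonhole: find a window of length L with small A-increment
  have hwin : ∃ j < N₀ + 1, A (N₀ + (j + 1) * L) - A (N₀ + j * L) ≤ 1 / 13 := by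
    by_contra hcon
    push_neg at hcon
    set K : ℕ := N₀ + 1 with hKdef
    have htel : ∑ j ∈ Finset.range K,
        (A (N₀ + (j + 1) * L) - A (N₀ + j * L)) = A (N₀ + K * L) - A N₀ := by
      have := Finset.sum_range_sub (fun j => A (N₀ + j * L)) K
      simpa using this
    have hlow : (K : ℝ) * (1 / 13) ≤ A (N₀ + K * L) - A N₀ := by
      rw [← htel]
      calc (K : ℝ) * (1 / 13) = ∑ _j ∈ Finset.range K, (1 / 13 : ℝ) := by
            rw [Finset.sum_const, Finset.card_range]; push_cast; ring
        _ ≤ _ := Finset.sum_le_sum fun j hj =>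
            le_of_lt (hcon j (Finset.mem_range.mp hj))
    have hup : A (N₀ + K * L) ≤ ε * (N₀ + K * L) := by
      have := hAbd (N₀ + K * L) (Nat.le_add_right _ _)
      simpa using this
    have hεval : ε * (26 * L) = 1 := by
      rw [hεdef]; field_simp
    have hLr : (1 : ℝ) ≤ (L : ℝ) := by exact_mod_cast hL1
    have hN₀r : (1 : ℝ) ≤ (N₀ : ℝ) := by exact_mod_cast hN₀1
    have hKr : (K : ℝ) = (N₀ : ℝ) + 1 := by push_cast [hKdef]; ring
    have hA0' := hA0 N₀
    have hεL : ε * (L : ℝ) = 1 / 26 := by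
      rw [hεdef]
      have : (L : ℝ) ≠ 0 := by positivity
      field_simp
    have hε26 : ε ≤ 1 / 26 := by
      calc ε = ε * 1 := (mul_one ε).symm
        _ ≤ ε * L := by nlinarith
        _ = 1 / 26 := hεL
    have hεN : ε * (N₀ : ℝ) ≤ (N₀ : ℝ) / 26 := by nlinarith
    have hexp : ε * ((N₀ : ℝ) + (K : ℝ) * (L : ℝ)) = ε * (N₀ : ℝ) + (ε * (L : ℝ)) * (K : ℝ) := by
      ring
    rw [hexp, hεL] at hup
    -- K/13 ≤ εN₀ + K/26 ≤ N₀/26 + K/26 ⇒ K ≤ N₀, contra K = N₀+1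
    linarith
  obtain ⟨j, hjK, hj⟩ := hwin
  set M : ℕ := N₀ + j * L with hMdef
  set N : ℕ := M + L with hNdef
  have hM1 : 1 ≤ M := le_trans hN₀1 (Nat.le_add_right _ _)
  have hMN : M ≤ N := Nat.le_add_right _ _
  have hAincr : A N - A M ≤ 1 / 13 := by
    have : N = N₀ + (j + 1) * L := by rw [hNdef, hMdef]; ring
    rw [this]; exact hj
  -- phase control on the window
  set c : ℝ := g (M + 1) with hcdef
  have hAsub : ∑ k ∈ Finset.Ioc M N, |d k| = A N - A M := by
    have := Finset.sum_Ioc_consecutive (fun k => |d k|) (Nat.zero_le M) hMN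
    rw [hAdef]; simp only at this ⊢; linarith [this]
  have hphase : ∀ n ∈ Finset.Ioc M N, |g n - c| ≤ 1 / 13 := by
    intro n hn
    obtain ⟨hn1, hn2⟩ := Finset.mem_Ioc.mp hn
    set m : ℕ := n - (M + 1) with hmdef
    have hnm : n = M + 1 + m := by omega
    have htel : ∑ i ∈ Finset.range m, d (M + 1 + i) = g (M + 1 + m) - g (M + 1) := by
      have h := Finset.sum_range_sub (fun i => g (M + 1 + i)) m
      simp only [add_zero] at h
      rw [← h]
      apply Finset.sum_congr rfl
      intro i _
      rw [hd, show M + 1 + i + 1 = M + 1 + (i + 1) by omega]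
    have habs : |g n - c| ≤ ∑ i ∈ Finset.range m, |d (M + 1 + i)| := by
      rw [hcdef, hnm, ← htel]
      exact Finset.abs_sum_le_sum_abs _ _
    have hre : ∑ i ∈ Finset.range m, |d (M + 1 + i)| = ∑ k ∈ Finset.Ioc M (M + m), |d k| := by
      rw [show Finset.Ioc M (M + m) = Finset.Ico (M + 1) (M + m + 1) by
        rw [Finset.Ico_add_one_right_eq_Icc, Finset.Icc_add_one_left_eq_Ioc]]
      rw [Finset.sum_Ico_eq_sum_range]
      apply Finset.sum_congr
      · congr 1; omega
      · intro i _; congr 1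
    have hsub : ∑ k ∈ Finset.Ioc M (M + m), |d k| ≤ ∑ k ∈ Finset.Ioc M N, |d k| := by
      apply Finset.sum_le_sum_of_subset_of_nonneg
      · apply Finset.Ioc_subset_Ioc le_rfl; omega
      · intro i _ _; exact abs_nonneg _
    calc |g n - c| ≤ ∑ k ∈ Finset.Ioc M (M + m), |d k| := by rw [← hre]; exact habs
      _ ≤ ∑ k ∈ Finset.Ioc M N, |d k| := hsub
      _ = A N - A M := hAsub
      _ ≤ 1 / 13 := hAincr
  -- lower bound on the real part
  have hSsub : S N - S M = ∑ k ∈ Finset.Ioc M N, e (g k) := by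
    have := Finset.sum_Ioc_consecutive (fun k => e (g k)) (Nat.zero_le M) hMN
    rw [hSdef]; simp only at this ⊢
    rw [← this]; ring
  have hcard : (Finset.Ioc M N).card = L := by
    rw [Nat.card_Ioc, hNdef]; omega
  have hkey : (L : ℝ) * (1 / 2) ≤ (e (-c) * (S N - S M)).re := by
    rw [hSsub, Finset.mul_sum, Complex.re_sum]
    have hterm : ∀ n ∈ Finset.Ioc M N, (1 / 2 : ℝ) ≤ (e (-c) * e (g n)).re := by
      intro n hn
      rw [← e_add, show -c + g n = g n - c by ring, e_re]
      set θ : ℝ := 2 * Real.pi * (g n - c) with hθdef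
      have hθb : |θ| ≤ 1 := by
        rw [hθdef, abs_mul]
        have hπ : |2 * Real.pi| ≤ 6.3 := by
          rw [abs_of_pos (by positivity)]
          linarith [Real.pi_lt_d2]
        have := hphase n hn
        calc |2 * Real.pi| * |g n - c| ≤ 6.3 * (1 / 13) :=
              mul_le_mul hπ this (abs_nonneg _) (by norm_num)
          _ ≤ 1 := by norm_num
      have hcos := Real.one_sub_sq_div_two_le_cos (x := θ)
      have hθsq : θ ^ 2 ≤ 1 := by
        have := sq_abs θ
        nlinarith [abs_nonneg θ]
      linarith
    calc (L : ℝ) * (1 / 2) = ∑ _n ∈ Finset.Ioc M N, (1 / 2 : ℝ) := by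
          rw [Finset.sum_const, hcard]; push_cast; ring
      _ ≤ _ := Finset.sum_le_sum hterm
  -- upper bound
  have hub : (e (-c) * (S N - S M)).re ≤ 2 * C := by
    calc (e (-c) * (S N - S M)).re ≤ ‖e (-c) * (S N - S M)‖ :=
          Complex.re_le_norm _
      _ = ‖S N - S M‖ := by rw [norm_mul, e_abs, one_mul]
      _ ≤ ‖S N‖ + ‖S M‖ := by
          simpa using norm_sub_le (S N) (S M)
      _ ≤ 2 * C := by linarith [hSC N, hSC M]
  have : (L : ℝ) * (1 / 2) ≤ 2 * C := le_trans hkey hub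
  linarith
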